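/- For every (x₁,x₂,x₃) ∈ 𝔛 one has (|x₁| − |x₂|)² ≤ 2·Re(x₁) + 2·Re(x₂) − 1 ≤ (|x₁| + |x₂|)², and both inequalities are strict if and only if Im(x₃) ≠ 0. Moreover, if Im(x₃) = 0 then the left inequality is an equality when x₃ > 0 and the right inequality is an equality when x₃ < 0. -/

import Mathlib

noncomputable section

open Complex

/-- Membership in Falbel's cross-ratio variety 𝔛. -/
def memX (x₁ x₂ x₃ : ℂ) : Prop :=
  x₁ ≠ 0 ∧ x₂ ≠ 0 ∧ x₃ ≠ 0 ∧
  ‖x₂‖ = ‖x₁‖ * ‖x₃‖ ∧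
  2 * ‖x₁‖ ^ 2 * x₃.re =
    ‖x₁‖ ^ 2 + ‖x₂‖ ^ 2 - 2 * x₁.re - 2 * x₂.re + 1

/-- On 𝔛 one has `(|x₁|−|x₂|)² ≤ 2·Re(x₁)+2·Re(x₂)−1 ≤ (|x₁|+|x₂|)²`, with both
inequalities strict iff `Im(x₃) ≠ 0`; if `Im(x₃) = 0` then the left inequality
is an equality when `x₃ > 0` and the right one when `x₃ < 0`. -/
theorem ineq_X (x₁ x₂ x₃ : ℂ) (hx : memX x₁ x₂ x₃) :
    ((‖x₁‖ - ‖x₂‖) ^ 2 ≤ 2 * x₁.re + 2 * x₂.re - 1 ∧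
     2 * x₁.re + 2 * x₂.re - 1 ≤ (‖x₁‖ + ‖x₂‖) ^ 2) ∧
    (((‖x₁‖ - ‖x₂‖) ^ 2 < 2 * x₁.re + 2 * x₂.re - 1 ∧
      2 * x₁.re + 2 * x₂.re - 1 < (‖x₁‖ + ‖x₂‖) ^ 2) ↔ x₃.im ≠ 0) ∧
    (x₃.im = 0 →
      (0 < x₃.re → (‖x₁‖ - ‖x₂‖) ^ 2 = 2 * x₁.re + 2 * x₂.re - 1) ∧
      (x₃.re < 0 → 2 * x₁.re + 2 * x₂.re - 1 = (‖x₁‖ + ‖x₂‖) ^ 2)) := by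
  obtain ⟨h1, h2, h3, hab, heq⟩ := hx
  have ha : 0 < ‖x₁‖ := norm_pos_iff.mpr h1
  have hre : |x₃.re| ≤ ‖x₃‖ := Complex.abs_re_le_norm x₃
  have habs := abs_le.mp hre
  constructor
  · constructor
    · nlinarith [mul_le_mul_of_nonneg_left habs.2 (sq_nonneg (‖x₁‖))]
    · nlinarith [mul_le_mul_of_nonneg_left habs.1 (sq_nonneg (‖x₁‖))]
  constructor
  · constructor
    · rintro ⟨hl, hr⟩ him
      have h4 : ‖x₃‖ = |x₃.re| := by
        rw [Complex.norm_def, Complex.normSq_apply, him]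
        simp [← Real.sqrt_sq_eq_abs, sq]
      rcases abs_cases x₃.re with ⟨h5, _⟩ | ⟨h5, _⟩
      · rw [h4, h5] at hab; nlinarith
      · rw [h4, h5] at hab; nlinarith
    · intro him
      have hlt : |x₃.re| < ‖x₃‖ := Complex.abs_re_lt_norm.mpr him
      have h5 := abs_lt.mp hlt
      constructor
      · nlinarith [mul_lt_mul_of_pos_left h5.2 (pow_pos ha 2)]
      · nlinarith [mul_lt_mul_of_pos_left h5.1 (pow_pos ha 2)]
  · intro him
    have h4 : ‖x₃‖ = |x₃.re| := by
      rw [Complex.norm_def, Complex.normSq_apply, him]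
      simp [← Real.sqrt_sq_eq_abs, sq]
    constructor
    · intro hpos
      rw [h4, abs_of_pos hpos] at hab
      nlinarith
    · intro hneg
      rw [h4, abs_of_neg hneg] at hab
      nlinarith
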